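/- Let λ ≥ 1, let X₁,…,X_T be vectors in ℝ^d with ‖X_t‖₂ ≤ 1 for all t, and define V_t = λI_d + Σ_{i=1}^t XᵢXᵢᵀ. Then Σ_{t=1}^T ‖X_t‖²_{V_{t−1}^{−1}} ≤ 2d log(1 + T/(dλ)). -/

import Mathlib

open Matrix

private lemma ep_log_aux {u : ℝ} (h0 : 0 ≤ u) (h1 : u ≤ 1) : u ≤ 2 * Real.log (1 + u) := by
  have hpos : (0:ℝ) < 1 + u := by linarith
  have h := Real.log_le_sub_one_of_pos (x := (1+u)⁻¹) (by positivity)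
  rw [Real.log_inv] at h
  have hL : 0 ≤ Real.log (1+u) := Real.log_nonneg (by linarith)
  have h2 : u ≤ (1+u) * Real.log (1+u) := by
    have hdle : u / (1+u) ≤ Real.log (1+u) := by
      have e : 1 - (1+u)⁻¹ = u/(1+u) := by field_simp; ring
      linarith
    exact (div_le_iff₀ hpos).mp hdle |>.trans_eq (mul_comm _ _)
  nlinarith

private lemma ep_amgm {d : ℕ} (hd : 0 < d) {M : Matrix (Fin d) (Fin d) ℝ} (hM : M.PosDef) :
    M.det ≤ (M.trace / d) ^ d ∧ 0 < M.trace := by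
  have hH := hM.isHermitian
  set e := hH.eigenvalues with he
  have hepos : ∀ i, 0 < e i := hM.eigenvalues_pos
  have hdet : M.det = ∏ i, e i := by simpa using hH.det_eq_prod_eigenvalues
  have htr : M.trace = ∑ i, e i := by
    simpa using hH.trace_eq_sum_eigenvalues
  constructor
  · have hgm : ∏ i, (e i) ^ ((d:ℝ)⁻¹) ≤ ∑ i, (d:ℝ)⁻¹ * e i :=
      Real.geom_mean_le_arith_mean_weighted Finset.univ (fun _ => (d:ℝ)⁻¹) e
        (fun _ _ => by positivity) (by
          simp [Finset.sum_const, Finset.card_univ]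
          field_simp) (fun i _ => (hepos i).le)
    have hprod : ∏ i, (e i) ^ ((d:ℝ)⁻¹) = (∏ i, e i) ^ ((d:ℝ)⁻¹) := by
      rw [← Real.finset_prod_rpow Finset.univ e (fun i _ => (hepos i).le)]
    have hsum : ∑ i, (d:ℝ)⁻¹ * e i = M.trace / d := by
      rw [htr, ← Finset.mul_sum]; ring
    rw [hprod, hsum] at hgm
    have hP : (0:ℝ) < ∏ i, e i := Finset.prod_pos (fun i _ => hepos i)
    calc M.det = ((∏ i, e i) ^ ((d:ℝ)⁻¹)) ^ d := by
          rw [← Real.rpow_natCast ((∏ i, e i) ^ ((d:ℝ)⁻¹)) d, ← Real.rpow_mul hP.le,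
            inv_mul_cancel₀ (by positivity), Real.rpow_one, hdet]
      _ ≤ (M.trace / d) ^ d := pow_le_pow_left₀ (by positivity) hgm d
  · rw [htr]
    exact Finset.sum_pos (fun i _ => hepos i)
      (by have : Nonempty (Fin d) := Fin.pos_iff_nonempty.mp hd; exact Finset.univ_nonempty)

/-- Elliptical potential lemma: with `λ ≥ 1`, `‖X_t‖₂ ≤ 1`, `V_t = λI + Σ_{i≤t} XᵢXᵢᵀ`,
`Σ_{t=1}^T ‖X_t‖²_{V_{t-1}⁻¹} ≤ 2 d log(1 + T/(dλ))`. Here `V t.val` is `V_{t-1}`. -/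
theorem stmt_4 (d T : ℕ) (hd : 0 < d) (lam : ℝ) (hlam : 1 ≤ lam)
    (X : Fin T → Fin d → ℝ)
    (hX : ∀ t, Real.sqrt (X t ⬝ᵥ X t) ≤ 1)
    (V : ℕ → Matrix (Fin d) (Fin d) ℝ)
    (hV0 : V 0 = lam • (1 : Matrix (Fin d) (Fin d) ℝ))
    (hVs : ∀ t : Fin T, V (t.val + 1) = V t.val + vecMulVec (X t) (X t)) :
    ∑ t : Fin T, X t ⬝ᵥ (V t.val)⁻¹.mulVec (X t)
      ≤ 2 * d * Real.log (1 + T / (d * lam)) := by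
  have hlam0 : (0:ℝ) < lam := lt_of_lt_of_le one_pos hlam
  have hd0 : (0:ℝ) < (d:ℝ) := by exact_mod_cast hd
  -- basic facts
  have hXX : ∀ t : Fin T, 0 ≤ X t ⬝ᵥ X t :=
    fun t => Finset.sum_nonneg fun i _ => mul_self_nonneg _
  have hXX1 : ∀ t : Fin T, X t ⬝ᵥ X t ≤ 1 := by
    intro t
    have h := hX t
    nlinarith [Real.sq_sqrt (hXX t), Real.sqrt_nonneg (X t ⬝ᵥ X t)]
  have hsmulPD : (lam • (1 : Matrix (Fin d) (Fin d) ℝ)).PosDef := by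
    rw [smul_one_eq_diagonal]
    exact posDef_diagonal_iff.mpr fun _ => hlam0
  have hvvPSD : ∀ t : Fin T, (vecMulVec (X t) (X t)).PosSemidef := by
    intro t
    rw [vecMulVec_eq Unit, show replicateRow Unit (X t) = (replicateCol Unit (X t))ᴴ by
      rw [conjTranspose_replicateCol]; simp]
    exact posSemidef_self_mul_conjTranspose _
  -- key induction : PSD of V t - lam•1 (hence PD of V t), trace bound
  have key : ∀ t : ℕ, t ≤ T →
      (V t - lam • 1).PosSemidef ∧ (V t).trace ≤ d * lam + t := by
    intro t
    induction t with
    | zero =>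
      intro _
      refine ⟨by rw [hV0]; simpa using Matrix.PosSemidef.zero, ?_⟩
      rw [hV0, trace_smul, trace_one]
      simp [mul_comm]
    | succ n ih =>
      intro hn
      obtain ⟨ih1, ih2⟩ := ih (Nat.le_of_succ_le hn)
      have hnT : n < T := hn
      have hrw := hVs ⟨n, hnT⟩
      simp only at hrw
      constructor
      · rw [hrw]
        have : V n + vecMulVec (X ⟨n, hnT⟩) (X ⟨n, hnT⟩) - lam • 1
            = (V n - lam • 1) + vecMulVec (X ⟨n, hnT⟩) (X ⟨n, hnT⟩) := by abel
        rw [this]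
        exact ih1.add (hvvPSD _)
      · rw [hrw, trace_add]
        have htvv : (vecMulVec (X ⟨n, hnT⟩) (X ⟨n, hnT⟩)).trace = X ⟨n, hnT⟩ ⬝ᵥ X ⟨n, hnT⟩ := by
          rw [vecMulVec_eq Unit, trace_replicateCol_mul_replicateRow]
        rw [htvv]
        push_cast
        have := hXX1 ⟨n, hnT⟩
        linarith
  have hPD : ∀ t : ℕ, t ≤ T → (V t).PosDef := by
    intro t ht
    have h := (key t ht).1
    have hvt : V t = (V t - lam • 1) + lam • 1 := by abel
    rw [hvt]
    exact Matrix.PosDef.posSemidef_add h hsmulPD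
  -- per-step quantities
  set u : Fin T → ℝ := fun t => X t ⬝ᵥ (V t.val)⁻¹.mulVec (X t) with hu
  have hu0 : ∀ t : Fin T, 0 ≤ u t := by
    intro t
    have h := ((hPD t.val (le_of_lt t.2)).inv.posSemidef).dotProduct_mulVec_nonneg (X t)
    simpa using h
  have hu1 : ∀ t : Fin T, u t ≤ 1 := by
    intro t
    have hPDt := hPD t.val (le_of_lt t.2)
    set y : Fin d → ℝ := (V t.val)⁻¹.mulVec (X t) with hy
    have hVy : (V t.val) *ᵥ y = X t := by
      rw [hy, mulVec_mulVec, mul_nonsing_inv _ (isUnit_iff_ne_zero.mpr hPDt.det_pos.ne'),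
        one_mulVec]
    have hyy : 0 ≤ y ⬝ᵥ y := Finset.sum_nonneg fun i _ => mul_self_nonneg _
    have h2 : lam * (y ⬝ᵥ y) ≤ u t := by
      have h := (key t.val (le_of_lt t.2)).1.dotProduct_mulVec_nonneg y
      simp only [star_trivial, sub_mulVec, dotProduct_sub, smul_mulVec, one_mulVec,
        dotProduct_smul, smul_eq_mul, hVy] at h
      have hdc : y ⬝ᵥ X t = u t := by rw [hu, dotProduct_comm]
      linarith
    have h3 : (u t) ^ 2 ≤ (X t ⬝ᵥ X t) * (y ⬝ᵥ y) := by
      have := Finset.sum_mul_sq_le_sq_mul_sq Finset.univ (X t) y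
      simp only [dotProduct, ← sq] at *
      rw [hu]; exact this
    nlinarith [hXX1 t, hXX t, hu0 t, h2, h3, hyy]
  -- determinant recursion
  have hdet : ∀ t : Fin T, (V (t.val + 1)).det = (V t.val).det * (1 + u t) := by
    intro t
    have hPDt := hPD t.val (le_of_lt t.2)
    rw [hVs t, vecMulVec_eq Unit,
      det_add_replicateCol_mul_replicateRow (isUnit_iff_ne_zero.mpr hPDt.det_pos.ne') _ _]
    congr 1
    rw [det_unique]
    simp only [Matrix.add_apply, Matrix.one_apply_eq]
    congr 1
    rw [← replicateRow_vecMul, replicateRow_mul_replicateCol_apply, ← dotProduct_mulVec]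
  -- log-det telescoping
  set f : ℕ → ℝ := fun n => Real.log (V n).det with hf
  have hstep : ∀ t : Fin T, u t ≤ 2 * (f (t.val + 1) - f t.val) := by
    intro t
    have hPDt := hPD t.val (le_of_lt t.2)
    have h1u : (0:ℝ) < 1 + u t := by linarith [hu0 t]
    have : f (t.val + 1) = f t.val + Real.log (1 + u t) := by
      rw [hf]
      simp only
      rw [hdet t, Real.log_mul hPDt.det_pos.ne' h1u.ne']
    rw [this]
    have := ep_log_aux (hu0 t) (hu1 t)
    linarith
  have hsum : ∑ t : Fin T, u t ≤ 2 * (f T - f 0) := by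
    calc ∑ t : Fin T, u t ≤ ∑ t : Fin T, 2 * (f (t.val + 1) - f t.val) :=
          Finset.sum_le_sum fun t _ => hstep t
      _ = ∑ i ∈ Finset.range T, 2 * (f (i + 1) - f i) :=
          Fin.sum_univ_eq_sum_range (fun i => 2 * (f (i + 1) - f i)) T
      _ = 2 * ∑ i ∈ Finset.range T, (f (i + 1) - f i) := by rw [Finset.mul_sum]
      _ = 2 * (f T - f 0) := by rw [Finset.sum_range_sub]
  -- evaluate f 0
  have hf0 : f 0 = d * Real.log lam := by
    rw [hf]
    simp only
    rw [hV0, det_smul, det_one, mul_one, Real.log_pow]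
    simp
  -- bound f T
  have hPDT := hPD T le_rfl
  obtain ⟨hdetT, htrpos⟩ := ep_amgm hd hPDT
  have htrT : (V T).trace ≤ d * lam + T := (key T le_rfl).2
  have hfT : f T ≤ d * Real.log ((d * lam + T) / d) := by
    have h1 : (V T).det ≤ ((d * lam + T) / d) ^ d := by
      refine hdetT.trans ?_
      apply pow_le_pow_left₀ (by positivity)
      gcongr
    have h2 : Real.log (V T).det ≤ Real.log (((d * lam + T) / d) ^ d) :=
      Real.log_le_log hPDT.det_pos h1
    rw [Real.log_pow] at h2
    exact h2
  -- finish
  have hfin : 2 * (f T - f 0) ≤ 2 * d * Real.log (1 + T / (d * lam)) := by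
    rw [hf0]
    have hlog : Real.log ((d * lam + T) / d) - Real.log lam
        = Real.log (1 + T / (d * lam)) := by
      rw [← Real.log_div (by positivity) hlam0.ne']
      congr 1
      field_simp
    calc 2 * (f T - d * Real.log lam)
        ≤ 2 * (d * Real.log ((d * lam + T) / d) - d * Real.log lam) := by linarith [hfT]
      _ = 2 * d * (Real.log ((d * lam + T) / d) - Real.log lam) := by ring
      _ = 2 * d * Real.log (1 + T / (d * lam)) := by rw [hlog]
  exact hsum.trans hfin
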